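/- Let A be a nontrivial commutative ring, α_1, …, α_N ∈ A such that α_i − α_j is a unit for all i ≠ j, v_1, …, v_N units of A, and 1 ≤ k ≤ N. Then the A-linear map sending a polynomial f ∈ A[X] with deg f < k to the vector (v_1 f(α_1), …, v_N f(α_N)) ∈ A^N is injective; consequently the generalized Reed–Solomon code GRS_v(N,k) = {(v_1 f(α_1), …, v_N f(α_N)) : f ∈ A[X], deg f < k} is a free A-module of rank k. -/

import Mathlib

open Polynomial in
lemma grs_aux {A : Type*} [CommRing A] [Nontrivial A] :
    ∀ (n : ℕ) (f : Polynomial A) (β : Fin n → A), f.degree < n →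
      (∀ i j, i ≠ j → IsUnit (β i - β j)) → (∀ i, f.eval (β i) = 0) → f = 0 := by
  intro n
  induction n with
  | zero =>
    intro f β hdeg _ _
    by_contra hf
    exact absurd (Polynomial.zero_le_degree_iff.mpr hf) (by simpa using hdeg.not_ge)
  | succ n ih =>
    intro f β hdeg hβ heval
    set a := β (Fin.last n) with ha
    obtain ⟨g, hg⟩ : X - C a ∣ f := Polynomial.dvd_iff_isRoot.mpr (heval (Fin.last n))
    by_cases hg0 : g = 0
    · simp [hg, hg0]
    · have hdg : g.degree < n := by
        have hmul : ((X - C a) * g).degree = g.degree + 1 := by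
          rw [mul_comm, (Polynomial.monic_X_sub_C a).degree_mul, Polynomial.degree_X_sub_C,
            add_comm]
        rw [hg, hmul] at hdeg
        have := Polynomial.degree_eq_natDegree hg0
        rw [this] at hdeg ⊢
        push_cast at hdeg ⊢
        exact_mod_cast (WithBot.add_lt_add_iff_right (by simp)).mp hdeg
      have hgz : g = 0 := by
        apply ih g (β ∘ Fin.castSucc) hdg
        · intro i j hij
          exact hβ _ _ (fun h => hij (Fin.castSucc_injective n h))
        · intro i
          have h1 : f.eval (β i.castSucc) = 0 := heval _
          rw [hg] at h1
          simp only [Polynomial.eval_mul, Polynomial.eval_sub, Polynomial.eval_X,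
            Polynomial.eval_C] at h1
          have hu : IsUnit (β i.castSucc - a) :=
            hβ _ _ (fun h => absurd (congrArg Fin.val h) (by simp [Fin.castSucc]; omega))
          exact (hu.mul_right_eq_zero).mp h1
      simp [hg, hgz]


/-- The evaluation (encoding) map of a generalized Reed–Solomon code: it sends a polynomial
of degree `< k` to the vector of its scaled evaluations at the points `α i`. -/
noncomputable def GRSmap (A : Type*) [CommRing A] {N : ℕ} (k : ℕ) (α v : Fin N → A) :
    Polynomial.degreeLT A k →ₗ[A] (Fin N → A) where
  toFun f i := v i * Polynomial.eval (α i) (f : Polynomial A)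
  map_add' f g := by funext i; simp [mul_add]
  map_smul' c f := by funext i; simp [Polynomial.eval_smul]; ring

/-- Over a nontrivial commutative ring `A`, given pairwise-subtractive
evaluation points `α` and unit multipliers `v`, the encoding map of the generalized
Reed–Solomon code `GRS_v(N, k)` (for `1 ≤ k ≤ N`) is injective, and the code (its range) is
a free `A`-module of rank `k`. -/
theorem GRS_free_of_rank (A : Type*) [CommRing A] [Nontrivial A] (N k : ℕ)
    (α v : Fin N → A) (hα : ∀ i j, i ≠ j → IsUnit (α i - α j)) (hv : ∀ i, IsUnit (v i))
    (hk1 : 1 ≤ k) (hkN : k ≤ N) :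
    Function.Injective (GRSmap A k α v) ∧
      Nonempty (Module.Basis (Fin k) A ↥(LinearMap.range (GRSmap A k α v))) := by
  have hinj : Function.Injective (GRSmap A k α v) := by
    rw [injective_iff_map_eq_zero]
    intro f hf
    have hβ : ∀ i j : Fin k, i ≠ j → IsUnit (α (Fin.castLE hkN i) - α (Fin.castLE hkN j)) :=
      fun i j hij => hα _ _ (fun h => hij (Fin.castLE_injective hkN h))
    have heval : ∀ i : Fin k, Polynomial.eval (α (Fin.castLE hkN i)) (f : Polynomial A) = 0 := by
      intro i
      have := congrFun hf (Fin.castLE hkN i)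
      simpa using ((hv _).mul_right_eq_zero).mp this
    have hdeg : (f : Polynomial A).degree < k := Polynomial.mem_degreeLT.mp f.2
    have : (f : Polynomial A) = 0 := grs_aux k (f : Polynomial A) _ hdeg hβ heval
    exact Subtype.ext this
  refine ⟨hinj, ⟨?_⟩⟩
  exact (((Pi.basisFun A (Fin k)).map (Polynomial.degreeLTEquiv A k).symm).map
    (LinearEquiv.ofInjective _ hinj))
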